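/- Let 𝒫 be any of the properties SBrSNNI, P_BrNDC, SBrNDC. If P ∈ 𝒫, then P/L ∈ 𝒫 for every L ⊆ A_L (compositionality with respect to hiding of low-level actions). -/
import Mathlib


namespace SecurityNI

/-- Process terms: `0`, action prefix (`none` = τ, `some a` = observable action),
choice, CSP-style parallel composition with synchronization set, restriction,
hiding, and constants (whose defining equations are given by an environment). -/
inductive Proc (A : Type) (C : Type) : Type where
  | nil : Proc A C
  | pre : Option A → Proc A C → Proc A C
  | choice : Proc A C → Proc A C → Proc A C
  | par : Set A → Proc A C → Proc A C → Proc A C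
  | restrict : Proc A C → Set A → Proc A C
  | hide : Proc A C → Set A → Proc A C
  | const : C → Proc A C

variable {A C : Type}

/-- A process term is guarded when every constant occurrence is in the scope
of an action prefix operator. -/
def Guarded : Proc A C → Prop
  | .nil => True
  | .pre _ _ => True
  | .choice p q => Guarded p ∧ Guarded q
  | .par _ p q => Guarded p ∧ Guarded q
  | .restrict p _ => Guarded p
  | .hide p _ => Guarded p
  | .const _ => False

/-- Operational semantics, parameterized by the defining equations `env` of
the constants.  Labels are `Option A`, with `none` playing the role of τ. -/
inductive Trans (env : C → Proc A C) : Proc A C → Option A → Proc A C → Prop where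
  | pre (a : Option A) (p : Proc A C) : Trans env (.pre a p) a p
  | choiceL {p q a p'} (h : Trans env p a p') : Trans env (.choice p q) a p'
  | choiceR {p q a q'} (h : Trans env q a q') : Trans env (.choice p q) a q'
  | parL {L p q a p'} (h : Trans env p a p') (hn : ∀ x, a = some x → x ∉ L) :
      Trans env (.par L p q) a (.par L p' q)
  | parR {L p q a q'} (h : Trans env q a q') (hn : ∀ x, a = some x → x ∉ L) :
      Trans env (.par L p q) a (.par L p q')
  | sync {L p q x p' q'} (h1 : Trans env p (some x) p') (h2 : Trans env q (some x) q')
      (hx : x ∈ L) : Trans env (.par L p q) (some x) (.par L p' q')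
  | res {p a p' L} (h : Trans env p a p') (hn : ∀ x, a = some x → x ∉ L) :
      Trans env (.restrict p L) a (.restrict p' L)
  | hideIn {p x p' L} (h : Trans env p (some x) p') (hx : x ∈ L) :
      Trans env (.hide p L) none (.hide p' L)
  | hideOut {p a p' L} (h : Trans env p a p') (hn : ∀ x, a = some x → x ∉ L) :
      Trans env (.hide p L) a (.hide p' L)
  | const {c a p'} (h : Trans env (env c) a p') : Trans env (.const c) a p'

section LTS

variable {S : Type} (tr : S → Option A → S → Prop)

/-- Finitely many (possibly zero) τ-transitions. -/
def TauStar : S → S → Prop :=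
  Relation.ReflTransGen (fun s s' => tr s none s')

/-- `B` is a branching bisimulation. -/
def IsBranchingBisim (B : S → S → Prop) : Prop :=
  Symmetric B ∧
    ∀ s1 s2, B s1 s2 → ∀ a s1', tr s1 a s1' →
      (a = none ∧ B s1' s2) ∨
      (∃ s2b s2', TauStar tr s2 s2b ∧ tr s2b a s2' ∧ B s1 s2b ∧ B s1' s2')

/-- Branching bisimilarity `≈_b`. -/
def BrBisim (s1 s2 : S) : Prop :=
  ∃ B, IsBranchingBisim tr B ∧ B s1 s2

/-- `B` is a weak bisimulation. -/
def IsWeakBisim (B : S → S → Prop) : Prop :=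
  Symmetric B ∧
    ∀ s1 s2, B s1 s2 →
      (∀ s1', tr s1 none s1' → ∃ s2', TauStar tr s2 s2' ∧ B s1' s2') ∧
      (∀ x s1', tr s1 (some x) s1' →
        ∃ t t' s2', TauStar tr s2 t ∧ tr t (some x) t' ∧ TauStar tr t' s2' ∧ B s1' s2')

/-- Weak bisimilarity `≈`. -/
def WeakBisim (s1 s2 : S) : Prop :=
  ∃ B, IsWeakBisim tr B ∧ B s1 s2

/-- Reachability via finitely many transitions. -/
def Reach : S → S → Prop :=
  Relation.ReflTransGen (fun s s' => ∃ a, tr s a s')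

end LTS

section Security

variable (env : C → Proc A C) (AH : Set A)

/-- `P ∈ BrSNNI` iff `P∖A_H ≈_b P/A_H`. -/
def BrSNNI (p : Proc A C) : Prop :=
  BrBisim (Trans env) (.restrict p AH) (.hide p AH)

/-- All processes reachable from `q` perform only actions in `AH`. -/
def HighOnly (q : Proc A C) : Prop :=
  ∀ q', Reach (Trans env) q q' → ∀ a q'', Trans env q' a q'' → ∃ h ∈ AH, a = some h

/-- `P ∈ BrNDC` iff `P∖A_H ≈_b ((P ∥_L Q)/L)∖A_H` for every high-level `Q`
and every `L ⊆ A_H`. -/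
def BrNDC (p : Proc A C) : Prop :=
  ∀ q, HighOnly env AH q → ∀ L, L ⊆ AH →
    BrBisim (Trans env) (.restrict p AH) (.restrict (.hide (.par L p q) L) AH)

/-- `P ∈ SBrSNNI` iff every reachable process is BrSNNI. -/
def SBrSNNI (p : Proc A C) : Prop :=
  ∀ p', Reach (Trans env) p p' → BrSNNI env AH p'

/-- `P ∈ P_BrNDC` iff every reachable process is BrNDC. -/
def PBrNDC (p : Proc A C) : Prop :=
  ∀ p', Reach (Trans env) p p' → BrNDC env AH p'

/-- `P ∈ SBrNDC` iff for every reachable `P'` and every high transition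
`P' --h→ P''`, `P'∖A_H ≈_b P''∖A_H`. -/
def SBrNDC (p : Proc A C) : Prop :=
  ∀ p' p'', Reach (Trans env) p p' → ∀ h ∈ AH, Trans env p' (some h) p'' →
    BrBisim (Trans env) (.restrict p' AH) (.restrict p'' AH)

/-- `P ∈ BSNNI` iff `P∖A_H ≈ P/A_H`. -/
def BSNNI (p : Proc A C) : Prop :=
  WeakBisim (Trans env) (.restrict p AH) (.hide p AH)

/-- `P ∈ BNDC` iff `P∖A_H ≈ ((P ∥_L Q)/L)∖A_H` for every high-level `Q`
and every `L ⊆ A_H`. -/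
def BNDC (p : Proc A C) : Prop :=
  ∀ q, HighOnly env AH q → ∀ L, L ⊆ AH →
    WeakBisim (Trans env) (.restrict p AH) (.restrict (.hide (.par L p q) L) AH)

/-- `P ∈ SBSNNI` iff every reachable process is BSNNI. -/
def SBSNNI (p : Proc A C) : Prop :=
  ∀ p', Reach (Trans env) p p' → BSNNI env AH p'

/-- `P ∈ P_BNDC` iff every reachable process is BNDC. -/
def PBNDC (p : Proc A C) : Prop :=
  ∀ p', Reach (Trans env) p p' → BNDC env AH p'

/-- `P ∈ SBNDC` iff for every reachable `P'` and every high transition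
`P' --h→ P''`, `P'∖A_H ≈ P''∖A_H`. -/
def SBNDC (p : Proc A C) : Prop :=
  ∀ p' p'', Reach (Trans env) p p' → ∀ h ∈ AH, Trans env p' (some h) p'' →
    WeakBisim (Trans env) (.restrict p' AH) (.restrict p'' AH)

/-- No high-level actions occur in `p`: no process reachable from `p`
can perform a high-level action. -/
def NoHigh (p : Proc A C) : Prop :=
  ∀ p', Reach (Trans env) p p' → ∀ h ∈ AH, ∀ p'', ¬ Trans env p' (some h) p''

end Security

section HideAux

variable {A C : Type} {env : C → Proc A C} {AH L : Set A}

/-- Reachable states of `hide P L` are hides of reachables of `P`. -/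
theorem reach_hide {P u : Proc A C}
    (h : Reach (Trans env) (.hide P L) u) :
    ∃ Q, u = .hide Q L ∧ Reach (Trans env) P Q := by
  induction h with
  | refl => exact ⟨P, rfl, Relation.ReflTransGen.refl⟩
  | tail _ step ih =>
    obtain ⟨Q, rfl, hQ⟩ := ih
    obtain ⟨a, ht⟩ := step
    cases ht with
    | hideIn h hx => exact ⟨_, rfl, hQ.tail ⟨_, h⟩⟩
    | hideOut h hn => exact ⟨_, rfl, hQ.tail ⟨_, h⟩⟩

/-- Structural correspondence used to transfer branching bisimulations
through hiding of `L` (with `L` disjoint from `AH`). -/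
inductive HideRel (AH L : Set A) : Proc A C → Proc A C → Prop
  | res (p : Proc A C) : HideRel AH L (.restrict p AH) (.restrict (.hide p L) AH)
  | hid (p : Proc A C) : HideRel AH L (.hide p AH) (.hide (.hide p L) AH)

theorem hr_back (hdisj : ∀ x ∈ L, x ∉ AH) {s u : Proc A C}
    (hr : HideRel AH L s u) {a : Option A} {u' : Proc A C}
    (ht : Trans env u a u') :
    ∃ s', HideRel AH L s' u' ∧
      ((Trans env s a s' ∧ ∀ x, a = some x → x ∉ L) ∨
       (a = none ∧ ∃ x ∈ L, Trans env s (some x) s')) := by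
  cases hr with
  | res p =>
    cases ht with
    | res h hn =>
      cases h with
      | hideIn h hx =>
        exact ⟨_, .res _, Or.inr ⟨rfl, _, hx, .res h
          (fun y hy => by cases hy; exact hdisj _ hx)⟩⟩
      | hideOut h hn2 =>
        exact ⟨_, .res _, Or.inl ⟨.res h hn, fun x hx => hn2 x hx⟩⟩
  | hid p =>
    cases ht with
    | hideIn h hx =>
      cases h with
      | hideOut h hn =>
        exact ⟨_, .hid _, Or.inl ⟨.hideIn h hx, fun y hy => nomatch hy⟩⟩
    | hideOut h hn =>
      cases h with
      | hideIn h hy =>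
        exact ⟨_, .hid _, Or.inr ⟨rfl, _, hy, .hideOut h
          (fun x hx => by cases hx; exact hdisj _ hy)⟩⟩
      | hideOut h hn2 =>
        exact ⟨_, .hid _, Or.inl ⟨.hideOut h hn, fun x hx => hn2 x hx⟩⟩

theorem hr_fwd_out (hdisj : ∀ x ∈ L, x ∉ AH) {s u : Proc A C}
    (hr : HideRel AH L s u) {a : Option A} {s' : Proc A C}
    (ht : Trans env s a s') (hnL : ∀ x, a = some x → x ∉ L) :
    ∃ u', HideRel AH L s' u' ∧ Trans env u a u' := by
  cases hr with
  | res p =>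
    cases ht with
    | res h hn => exact ⟨_, .res _, .res (.hideOut h hnL) hn⟩
  | hid p =>
    cases ht with
    | hideIn h hx => exact ⟨_, .hid _, .hideIn (.hideOut h (fun y hy => by
        cases hy; exact fun hyl => hdisj _ hyl hx)) hx⟩
    | hideOut h hn => exact ⟨_, .hid _, .hideOut (.hideOut h hnL) hn⟩

theorem hr_fwd_in (hdisj : ∀ x ∈ L, x ∉ AH) {s u : Proc A C}
    (hr : HideRel AH L s u) {x : A} {s' : Proc A C}
    (ht : Trans env s (some x) s') (hx : x ∈ L) :
    ∃ u', HideRel AH L s' u' ∧ Trans env u none u' := by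
  cases hr with
  | res p =>
    cases ht with
    | res h hn => exact ⟨_, .res _, .res (.hideIn h hx) (fun y hy => nomatch hy)⟩
  | hid p =>
    cases ht with
    | hideOut h hn => exact ⟨_, .hid _, .hideOut (.hideIn h hx) (fun y hy => nomatch hy)⟩

theorem hr_taustar (hdisj : ∀ x ∈ L, x ∉ AH) {t w : Proc A C}
    (hr : HideRel AH L t w) {t' : Proc A C}
    (h : TauStar (Trans env) t t') :
    ∃ w', HideRel AH L t' w' ∧ TauStar (Trans env) w w' := by
  induction h with
  | refl => exact ⟨w, hr, Relation.ReflTransGen.refl⟩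
  | tail _ step ih =>
    obtain ⟨w1, hr1, hts⟩ := ih
    obtain ⟨w2, hr2, ht2⟩ := hr_fwd_out hdisj hr1 step (fun x hx => nomatch hx)
    exact ⟨w2, hr2, hts.tail ht2⟩

/-- Transfer of branching bisimilarity through hiding of low actions. -/
theorem brbisim_hiderel (hdisj : ∀ x ∈ L, x ∉ AH) {s t u v : Proc A C}
    (hsu : HideRel AH L s u) (htv : HideRel AH L t v)
    (hb : BrBisim (Trans env) s t) :
    BrBisim (Trans env) u v := by
  obtain ⟨B, ⟨hBsym, hB⟩, hst⟩ := hb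
  refine ⟨fun u v => ∃ s t, HideRel AH L s u ∧ HideRel AH L t v ∧ B s t,
    ⟨fun u v ⟨s, t, hs, ht, hst⟩ => ⟨t, s, ht, hs, hBsym hst⟩, ?_⟩,
    ⟨s, t, hsu, htv, hst⟩⟩
  rintro u v ⟨s, t, hsu, htv, hst⟩ a u' htr
  obtain ⟨s', hs'u', hcase⟩ := hr_back hdisj hsu htr
  rcases hcase with ⟨hts, hnL⟩ | ⟨rfl, x, hxL, hts⟩
  · rcases hB s t hst a s' hts with ⟨rfl, hB'⟩ | ⟨t1, t2, hts1, htr1, hb1, hb2⟩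
    · exact Or.inl ⟨rfl, s', t, hs'u', htv, hB'⟩
    · obtain ⟨v1, hrv1, hvs1⟩ := hr_taustar hdisj htv hts1
      obtain ⟨v2, hrv2, hvt2⟩ := hr_fwd_out hdisj hrv1 htr1 hnL
      exact Or.inr ⟨v1, v2, hvs1, hvt2, ⟨s, t1, hsu, hrv1, hb1⟩,
        ⟨s', t2, hs'u', hrv2, hb2⟩⟩
  · rcases hB s t hst (some x) s' hts with ⟨h0, _⟩ | ⟨t1, t2, hts1, htr1, hb1, hb2⟩
    · exact absurd h0 (by simp)
    · obtain ⟨v1, hrv1, hvs1⟩ := hr_taustar hdisj htv hts1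
      obtain ⟨v2, hrv2, hvt2⟩ := hr_fwd_in hdisj hrv1 htr1 hxL
      exact Or.inr ⟨v1, v2, hvs1, hvt2, ⟨s, t1, hsu, hrv1, hb1⟩,
        ⟨s', t2, hs'u', hrv2, hb2⟩⟩

/-- Composing a branching bisimulation with a strong bisimulation. -/
theorem brbisim_comp_strong {S : Type} {tr : S → Option A → S → Prop}
    {x y z : S} (h1 : BrBisim tr x y) (W : S → S → Prop)
    (hWsym : Symmetric W)
    (hW : ∀ s1 s2, W s1 s2 → ∀ a s1', tr s1 a s1' → ∃ s2', tr s2 a s2' ∧ W s1' s2')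
    (hyz : W y z) : BrBisim tr x z := by
  obtain ⟨B, ⟨hBsym, hB⟩, hxy⟩ := h1
  have wstar : ∀ {v w v'}, W v w → TauStar tr v v' →
      ∃ w', TauStar tr w w' ∧ W v' w' := by
    intro v w v' hvw h
    induction h with
    | refl => exact ⟨w, Relation.ReflTransGen.refl, hvw⟩
    | tail _ step ih =>
      obtain ⟨w1, hts, hw1⟩ := ih
      obtain ⟨w2, ht2, hw2⟩ := hW _ _ hw1 _ _ step
      exact ⟨w2, hts.tail ht2, hw2⟩
  refine ⟨fun u w => (∃ v, B u v ∧ W v w) ∨ (∃ v, B w v ∧ W v u),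
    ⟨fun u w h => h.elim (fun ⟨v, h1, h2⟩ => Or.inr ⟨v, h1, h2⟩)
      (fun ⟨v, h1, h2⟩ => Or.inl ⟨v, h1, h2⟩), ?_⟩,
    Or.inl ⟨y, hxy, hyz⟩⟩
  rintro u w (⟨v, hb, hw⟩ | ⟨v, hb, hw⟩) a u' htr
  · rcases hB u v hb a u' htr with ⟨rfl, hB'⟩ | ⟨v1, v2, hts, htr1, hb1, hb2⟩
    · exact Or.inl ⟨rfl, Or.inl ⟨v, hB', hw⟩⟩
    · obtain ⟨w1, hws, hw1⟩ := wstar hw hts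
      obtain ⟨w2, hwt, hw2⟩ := hW _ _ hw1 _ _ htr1
      exact Or.inr ⟨w1, w2, hws, hwt, Or.inl ⟨v1, hb1, hw1⟩, Or.inl ⟨v2, hb2, hw2⟩⟩
  · obtain ⟨v', htv, hwv'⟩ := hW _ _ (hWsym hw) _ _ htr
    rcases hB v w (hBsym hb) a v' htv with ⟨rfl, hB'⟩ |
        ⟨w1, w2, hts, htr1, hb1, hb2⟩
    · exact Or.inl ⟨rfl, Or.inr ⟨v', hBsym hB', hWsym hwv'⟩⟩
    · exact Or.inr ⟨w1, w2, hts, htr1, Or.inr ⟨v, hBsym hb1, hw⟩,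
        Or.inr ⟨v', hBsym hb2, hWsym hwv'⟩⟩

end HideAux

section SwapAux

variable {A C : Type} {env : C → Proc A C} {AH L L' : Set A} {q0 : Proc A C}

/-- Left state of the hiding/parallel swap. -/
def leftSt (AH L L' : Set A) (p q : Proc A C) : Proc A C :=
  .restrict (.hide (.hide (.par L' p q) L') L) AH

/-- Right state of the hiding/parallel swap. -/
def rightSt (AH L L' : Set A) (p q : Proc A C) : Proc A C :=
  .restrict (.hide (.par L' (.hide p L) q) L') AH

theorem swap_fwd (hdisj : ∀ x ∈ L, x ∉ AH) (hL' : L' ⊆ AH)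
    (hq0 : HighOnly env AH q0) {p q : Proc A C} (hq : Reach (Trans env) q0 q)
    {a : Option A} {u : Proc A C}
    (ht : Trans env (leftSt AH L L' p q) a u) :
    ∃ p' q', u = leftSt AH L L' p' q' ∧
      Trans env (rightSt AH L L' p q) a (rightSt AH L L' p' q') ∧
      Reach (Trans env) q0 q' := by
  cases ht with
  | res h hnAH =>
    cases h with
    | hideIn h hyL =>
      -- inner2 does some y, y ∈ L; result label none
      rename_i y _
      cases h with
      | hideOut h hnL' =>
        cases h with
        | parL h hn =>
          refine ⟨_, q, rfl, ?_, hq⟩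
          exact .res (.hideOut (.parL (.hideIn h hyL) (fun x hx => nomatch hx))
            (fun x hx => nomatch hx)) (fun x hx => nomatch hx)
        | parR h hn =>
          obtain ⟨h', hh', heq⟩ := hq0 q hq _ _ h
          cases heq; exact absurd hh' (hdisj _ hyL)
        | sync h1 h2 hx => exact absurd hx (hnL' _ rfl)
    | hideOut h hnL =>
      cases h with
      | hideIn h hzL' =>
        rename_i z _
        cases h with
        | parL h hn => exact absurd hzL' (hn _ rfl)
        | parR h hn => exact absurd hzL' (hn _ rfl)
        | sync h1 h2 hx =>
          refine ⟨_, _, rfl, ?_, hq.tail ⟨_, h2⟩⟩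
          exact .res (.hideIn (.sync (.hideOut h1
            (fun y hy => by cases hy; exact fun hz => hdisj _ hz (hL' hx))) h2 hx)
            hzL') (fun x hx => nomatch hx)
      | hideOut h hnL' =>
        cases h with
        | parL h hn =>
          refine ⟨_, q, rfl, ?_, hq⟩
          exact .res (.hideOut (.parL (.hideOut h hnL) hn) hnL') hnAH
        | parR h hn =>
          obtain ⟨h', hh', heq⟩ := hq0 q hq _ _ h
          cases heq; exact absurd hh' (hnAH _ rfl)
        | sync h1 h2 hx => exact absurd hx (hnL' _ rfl)

theorem swap_bwd (hdisj : ∀ x ∈ L, x ∉ AH) (hL' : L' ⊆ AH)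
    (hq0 : HighOnly env AH q0) {p q : Proc A C} (hq : Reach (Trans env) q0 q)
    {a : Option A} {u : Proc A C}
    (ht : Trans env (rightSt AH L L' p q) a u) :
    ∃ p' q', u = rightSt AH L L' p' q' ∧
      Trans env (leftSt AH L L' p q) a (leftSt AH L L' p' q') ∧
      Reach (Trans env) q0 q' := by
  cases ht with
  | res h hnAH =>
    cases h with
    | hideIn h hzL' =>
      rename_i z _
      cases h with
      | parL h hn => exact absurd hzL' (hn _ rfl)
      | parR h hn => exact absurd hzL' (hn _ rfl)
      | sync h1 h2 hx =>
        cases h1 with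
        | hideOut h hnL =>
          refine ⟨_, _, rfl, ?_, hq.tail ⟨_, h2⟩⟩
          exact .res (.hideOut (.hideIn (.sync h h2 hx) hzL')
            (fun x hx => nomatch hx)) (fun x hx => nomatch hx)
    | hideOut h hnL' =>
      cases h with
      | parL h hn =>
        cases h with
        | hideIn h hyL =>
          rename_i y _
          refine ⟨_, q, rfl, ?_, hq⟩
          exact .res (.hideIn (.hideOut (.parL h
            (fun x hx => by cases hx; exact fun hz => hdisj _ hyL (hL' hz)))
            (fun x hx => by cases hx; exact fun hz => hdisj _ hyL (hL' hz))) hyL)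
            (fun x hx => nomatch hx)
        | hideOut h hnL =>
          refine ⟨_, q, rfl, ?_, hq⟩
          exact .res (.hideOut (.hideOut (.parL h hn) hnL') hnL) hnAH
      | parR h hn =>
        obtain ⟨h', hh', heq⟩ := hq0 q hq _ _ h
        cases heq; exact absurd hh' (hnAH _ rfl)
      | sync h1 h2 hx => exact absurd hx (hnL' _ rfl)

/-- The swap strong-bisimulation composed onto a branching bisimulation. -/
theorem brbisim_swap (hdisj : ∀ x ∈ L, x ∉ AH) (hL' : L' ⊆ AH)
    (hq0 : HighOnly env AH q0) {x : Proc A C} {p : Proc A C}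
    (h1 : BrBisim (Trans env) x (leftSt AH L L' p q0)) :
    BrBisim (Trans env) x (rightSt AH L L' p q0) := by
  refine brbisim_comp_strong h1
    (fun y z => (∃ p q, Reach (Trans env) q0 q ∧ y = leftSt AH L L' p q ∧
        z = rightSt AH L L' p q) ∨
      (∃ p q, Reach (Trans env) q0 q ∧ z = leftSt AH L L' p q ∧
        y = rightSt AH L L' p q))
    (fun y z h => h.elim (fun ⟨p, q, h1, h2, h3⟩ => Or.inr ⟨p, q, h1, h2, h3⟩)
      (fun ⟨p, q, h1, h2, h3⟩ => Or.inl ⟨p, q, h1, h2, h3⟩)) ?_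
    (Or.inl ⟨p, q0, Relation.ReflTransGen.refl, rfl, rfl⟩)
  rintro s1 s2 (⟨p, q, hq, rfl, rfl⟩ | ⟨p, q, hq, rfl, rfl⟩) a s1' htr
  · obtain ⟨p', q', rfl, ht', hq'⟩ := swap_fwd hdisj hL' hq0 hq htr
    exact ⟨_, ht', Or.inl ⟨p', q', hq', rfl, rfl⟩⟩
  · obtain ⟨p', q', rfl, ht', hq'⟩ := swap_bwd hdisj hL' hq0 hq htr
    exact ⟨_, ht', Or.inr ⟨p', q', hq', rfl, rfl⟩⟩

end SwapAux

/-- SBrSNNI, P_BrNDC and SBrNDC are compositional w.r.t.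
hiding of low-level actions (`L ⊆ A_L`). -/
theorem hide_compositionality {A C : Type} (env : C → Proc A C)
    (hguard : ∀ c, Guarded (env c)) (AH : Set A) (P : Proc A C)
    (L : Set A) (hL : ∀ x ∈ L, x ∉ AH) :
    (SBrSNNI env AH P → SBrSNNI env AH (Proc.hide P L)) ∧
    (PBrNDC env AH P → PBrNDC env AH (Proc.hide P L)) ∧
    (SBrNDC env AH P → SBrNDC env AH (Proc.hide P L)) := by
  refine ⟨?_, ?_, ?_⟩
  · intro hP p' hreach
    obtain ⟨Q, rfl, hQ⟩ := reach_hide hreach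
    exact brbisim_hiderel hL (.res Q) (.hid Q) (hP Q hQ)
  · intro hP p' hreach
    obtain ⟨Q, rfl, hQ⟩ := reach_hide hreach
    intro q hq L' hL'
    exact brbisim_swap hL hL' hq
      (brbisim_hiderel hL (.res Q) (.res _) (hP Q hQ q hq L' hL'))
  · intro hP p' p'' hreach h hh htr
    obtain ⟨Q, rfl, hQ⟩ := reach_hide hreach
    cases htr with
    | hideOut ht hn =>
      exact brbisim_hiderel hL (.res Q) (.res _) (hP Q _ hQ h hh ht)

end SecurityNI
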